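/- The alliance polynomial of the path graph P_n on n ≥ 2 vertices is A(P_n;x) = (n−2)x^{n−2} + 2x^{n−1} + ((n−2)(n+1)/2)·x^n + x^{n+1}. -/

import Mathlib

open Finset Polynomial
open scoped Classical

noncomputable section

variable {V : Type*} [Fintype V]

/-- Number of neighbors of `v` inside `S` (as an integer). -/
def degIn (G : SimpleGraph V) (S : Finset V) (v : V) : ℤ :=
  ((S.filter (fun u => G.Adj v u)).card : ℤ)

/-- Number of neighbors of `v` outside `S` (as an integer). -/
def degOut (G : SimpleGraph V) (S : Finset V) (v : V) : ℤ :=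
  ((Sᶜ.filter (fun u => G.Adj v u)).card : ℤ)

/-- The exact index of alliance of `S`. -/
def exactIndex (G : SimpleGraph V) (S : Finset V) : ℤ :=
  if h : S.Nonempty then S.inf' h (fun v => degIn G S v - degOut G S v) else 0

/-- Nonempty vertex subsets inducing a connected subgraph. -/
def goodSets (G : SimpleGraph V) : Finset (Finset V) :=
  Finset.univ.filter (fun S => S.Nonempty ∧ (G.induce (S : Set V)).Connected)

/-- The alliance polynomial. -/
def alliancePoly (G : SimpleGraph V) : Polynomial ℤ :=
  ∑ S ∈ goodSets G, X ^ (((Fintype.card V : ℤ) + exactIndex G S).toNat)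

/-- `A_k(Γ)`: number of connected exact defensive `k`-alliances. -/
def allianceCount (G : SimpleGraph V) (k : ℤ) : ℕ :=
  ((goodSets G).filter (fun S => exactIndex G S = k)).card

end

open SimpleGraph in
lemma mem_of_walk {n : ℕ} {S : Finset (Fin n)} {x y : ↥((S : Set (Fin n)))}
    (p : ((SimpleGraph.pathGraph n).induce (S : Set (Fin n))).Walk x y) :
    ∀ c : Fin n, (x : Fin n) ≤ c → c ≤ (y : Fin n) → c ∈ S := by
  induction p with
  | @nil u =>
      intro c h1 h2
      have : c = (u : Fin n) := le_antisymm h2 h1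
      subst this; exact u.2
  | @cons u w y h p ih =>
      intro c h1 h2
      have hadj : (SimpleGraph.pathGraph n).Adj (u : Fin n) (w : Fin n) := h
      rw [SimpleGraph.pathGraph_adj] at hadj
      by_cases hc : (w : Fin n) ≤ c
      · exact ih c hc h2
      · have h1' : (u : Fin n).val ≤ c.val := h1
        have hc' : c.val < ((w : Fin n)).val := Fin.lt_def.mp (not_le.mp hc)
        have : c = (u : Fin n) := Fin.ext (by omega)
        subst this; exact u.2

lemma reach_aux {n : ℕ} (a b : Fin n) (k : ℕ) :
    ∀ (x y : ↥((Finset.Icc a b : Finset (Fin n)) : Set (Fin n))),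
    (x : Fin n) ≤ y → ((y : Fin n)).val - ((x : Fin n)).val = k →
    ((SimpleGraph.pathGraph n).induce ((Finset.Icc a b : Finset (Fin n)) : Set (Fin n))).Reachable x y := by
  induction k with
  | zero =>
      intro x y hxy hk
      have : (x : Fin n) = (y : Fin n) := Fin.ext (by have := Fin.le_def.mp hxy; omega)
      have : x = y := Subtype.ext this
      subst this; exact SimpleGraph.Reachable.refl x
  | succ k ih =>
      intro x y hxy hk
      have hxv : ((x : Fin n)).val < ((y : Fin n)).val := by omega
      have hlt : ((x : Fin n)).val + 1 < n := by
        have := ((y : Fin n)).isLt; omega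
      have hxmem : (x : Fin n) ∈ Finset.Icc a b := by simpa using x.2
      have hymem : (y : Fin n) ∈ Finset.Icc a b := by simpa using y.2
      rw [Finset.mem_Icc, Fin.le_def, Fin.le_def] at hxmem hymem
      have hmem : (⟨((x : Fin n)).val + 1, hlt⟩ : Fin n) ∈ Finset.Icc a b := by
        rw [Finset.mem_Icc, Fin.le_def, Fin.le_def]
        constructor
        · show a.val ≤ (x : Fin n).val + 1; omega
        · show (x : Fin n).val + 1 ≤ b.val; omega
      set x' : ↥((Finset.Icc a b : Finset (Fin n)) : Set (Fin n)) :=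
        ⟨⟨((x : Fin n)).val + 1, hlt⟩, by simpa using hmem⟩ with hx'
      have hadj : ((SimpleGraph.pathGraph n).induce ((Finset.Icc a b : Finset (Fin n)) : Set (Fin n))).Adj x x' := by
        show (SimpleGraph.pathGraph n).Adj _ _
        rw [SimpleGraph.pathGraph_adj]; left; rfl
      have hrest : ((SimpleGraph.pathGraph n).induce ((Finset.Icc a b : Finset (Fin n)) : Set (Fin n))).Reachable x' y := by
        apply ih
        · rw [Fin.le_def]; show ((x:Fin n)).val + 1 ≤ _; omega
        · show ((y : Fin n)).val - (((x:Fin n)).val + 1) = k; omega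
      exact (hadj.reachable).trans hrest

open SimpleGraph in
lemma card_filter_unique {α : Type*} (T : Finset α) (P : α → Prop) [DecidablePred P]
    (h : ∀ u w, P u → P w → u = w) :
    (T.filter P).card = if ∃ u ∈ T, P u then 1 else 0 := by
  split_ifs with hex
  · obtain ⟨u, hu, hpu⟩ := hex
    rw [Finset.card_eq_one]
    refine ⟨u, ?_⟩
    ext w
    simp only [Finset.mem_filter, Finset.mem_singleton]
    constructor
    · rintro ⟨hw, hpw⟩; exact h w u hpw hpu
    · rintro rfl; exact ⟨hu, hpu⟩
  · rw [Finset.card_eq_zero, Finset.filter_eq_empty_iff]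
    intro u hu hpu
    exact hex ⟨u, hu, hpu⟩

lemma card_filter_adj {n : ℕ} (v : Fin n) (T : Finset (Fin n))
    [inst : DecidablePred (fun u => (SimpleGraph.pathGraph n).Adj v u)] :
    (T.filter (fun u => (SimpleGraph.pathGraph n).Adj v u)).card
      = (if ∃ u ∈ T, (u : ℕ) = v.val + 1 then 1 else 0)
        + (if ∃ u ∈ T, (u : ℕ) + 1 = v.val then 1 else 0) := by
  rw [Finset.filter_congr_decidable]
  have : T.filter (fun u => (SimpleGraph.pathGraph n).Adj v u)
      = T.filter (fun u : Fin n => (u : ℕ) = v.val + 1) ∪ T.filter (fun u : Fin n => (u : ℕ) + 1 = v.val) := by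
    rw [← Finset.filter_or]
    apply Finset.filter_congr
    intro u _
    rw [SimpleGraph.pathGraph_adj]
    constructor
    · rintro (h | h); · left; omega
      · right; omega
    · rintro (h | h); · left; omega
      · right; omega
  rw [this, Finset.card_union_of_disjoint, card_filter_unique _ _ (fun u w hu hw => Fin.ext (by omega)),
    card_filter_unique _ _ (fun u w hu hw => Fin.ext (by omega))]
  · congr
  rw [Finset.disjoint_filter]
  intro u _ h1 h2
  omega

lemma f_eval {n : ℕ} (a b v : Fin n) (hab : a ≤ b) (hv : v ∈ Finset.Icc a b) :
    degIn (SimpleGraph.pathGraph n) (Finset.Icc a b) v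
      - degOut (SimpleGraph.pathGraph n) (Finset.Icc a b) v
    = ((if v.val + 1 ≤ b.val then 1 else 0) + (if a.val + 1 ≤ v.val then 1 else 0)
      - (if v = b ∧ b.val + 1 < n then 1 else 0) - (if v = a ∧ 1 ≤ a.val then 1 else 0) : ℤ) := by
  rw [Finset.mem_Icc, Fin.le_def, Fin.le_def] at hv
  rw [Fin.le_def] at hab
  have hvlt := v.isLt
  rw [degIn, degOut, card_filter_adj, card_filter_adj]
  have memIcc : ∀ u : Fin n, u ∈ Finset.Icc a b ↔ a.val ≤ u.val ∧ u.val ≤ b.val := by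
    intro u; rw [Finset.mem_Icc, Fin.le_def, Fin.le_def]
  have memC : ∀ u : Fin n, u ∈ (Finset.Icc a b)ᶜ ↔ ¬(a.val ≤ u.val ∧ u.val ≤ b.val) := by
    intro u; rw [Finset.mem_compl, memIcc]
  -- four existence iffs
  have e1 : (∃ u ∈ Finset.Icc a b, (u : ℕ) = v.val + 1) ↔ v.val + 1 ≤ b.val := by
    constructor
    · rintro ⟨u, hu, hu2⟩; rw [memIcc] at hu; omega
    · intro h
      have hlt : v.val + 1 < n := by have := b.isLt; omega
      exact ⟨⟨v.val + 1, hlt⟩, (memIcc _).mpr (by simp only [Fin.val_mk]; omega), rfl⟩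
  have e2 : (∃ u ∈ Finset.Icc a b, (u : ℕ) + 1 = v.val) ↔ a.val + 1 ≤ v.val := by
    constructor
    · rintro ⟨u, hu, hu2⟩; rw [memIcc] at hu; omega
    · intro h
      have hlt : v.val - 1 < n := by omega
      exact ⟨⟨v.val - 1, hlt⟩, (memIcc _).mpr (by simp only [Fin.val_mk]; omega), by simp only [Fin.val_mk]; omega⟩
  have e3 : (∃ u, u ∉ Finset.Icc a b ∧ (u : ℕ) = v.val + 1) ↔ (v = b ∧ b.val + 1 < n) := by
    constructor
    · rintro ⟨u, hu, hu2⟩; rw [memIcc] at hu; push_neg at hu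
      have := u.isLt
      constructor
      · exact Fin.ext (by omega)
      · omega
    · rintro ⟨rfl, h⟩
      refine ⟨⟨v.val + 1, h⟩, fun hc => ?_, rfl⟩
      rw [memIcc] at hc; simp only [Fin.val_mk] at hc; omega
  have e4 : (∃ u, u ∉ Finset.Icc a b ∧ (u : ℕ) + 1 = v.val) ↔ (v = a ∧ 1 ≤ a.val) := by
    constructor
    · rintro ⟨u, hu, hu2⟩; rw [memIcc] at hu; push_neg at hu
      constructor
      · exact Fin.ext (by omega)
      · omega
    · rintro ⟨rfl, h⟩
      have hlt : v.val - 1 < n := by omega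
      refine ⟨⟨v.val - 1, hlt⟩, fun hc => ?_, by simp only [Fin.val_mk]; omega⟩
      rw [memIcc] at hc; simp only [Fin.val_mk] at hc; omega
  simp only [Finset.mem_compl, exists_prop] at *
  simp only [e1, e2, e3, e4]
  push_cast
  split_ifs <;> ring

lemma exactIndex_Icc {n : ℕ} (hn : 2 ≤ n) (a b : Fin n) (hab : a ≤ b) :
    exactIndex (SimpleGraph.pathGraph n) (Finset.Icc a b)
      = if a = b then (if a.val = 0 ∨ a.val + 1 = n then -1 else -2)
        else if a.val = 0 ∧ b.val + 1 = n then 1 else 0 := by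
  have hne : (Finset.Icc a b).Nonempty := ⟨a, Finset.mem_Icc.mpr ⟨le_refl a, hab⟩⟩
  rw [exactIndex, dif_pos hne]
  have hamem : a ∈ Finset.Icc a b := Finset.mem_Icc.mpr ⟨le_refl a, hab⟩
  have hbmem : b ∈ Finset.Icc a b := Finset.mem_Icc.mpr ⟨hab, le_refl b⟩
  have habv : a.val ≤ b.val := Fin.le_def.mp hab
  have hbv := b.isLt
  apply le_antisymm
  · -- inf' ≤ value via witness
    by_cases hd : a = b
    · subst hd
      refine le_trans (Finset.inf'_le _ hamem) ?_
      rw [f_eval a a a (le_refl a) hamem]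
      split_ifs <;> omega
    · have hav : a.val < b.val := lt_of_le_of_ne habv (fun h => hd (Fin.ext h))
      by_cases hcase : a.val = 0 ∧ b.val + 1 = n
      · refine le_trans (Finset.inf'_le _ hamem) ?_
        rw [f_eval a b a hab hamem]
        have hne' : ¬(a = b) := hd
        split_ifs <;> simp_all <;> omega
      · -- witness giving 0
        by_cases ha0 : a.val = 0
        · -- then b.val + 1 < n, witness b
          refine le_trans (Finset.inf'_le _ hbmem) ?_
          rw [f_eval a b b hab hbmem]
          split_ifs <;> simp_all <;> omega
        · refine le_trans (Finset.inf'_le _ hamem) ?_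
          rw [f_eval a b a hab hamem]
          split_ifs <;> simp_all <;> omega
  · -- lower bound
    apply Finset.le_inf'
    intro v hv
    have hvmem := hv
    rw [f_eval a b v hab hv]
    rw [Finset.mem_Icc, Fin.le_def, Fin.le_def] at hvmem
    by_cases hd : a = b
    · subst hd
      have : v = a := Fin.ext (by omega)
      subst this
      split_ifs <;> simp_all <;> omega
    · have hav : a.val < b.val := lt_of_le_of_ne habv (fun h => hd (Fin.ext h))
      have hvb : v = b ↔ v.val = b.val := ⟨fun h => h ▸ rfl, fun h => Fin.ext h⟩
      have hva : v = a ↔ v.val = a.val := ⟨fun h => h ▸ rfl, fun h => Fin.ext h⟩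
      split_ifs <;> simp_all <;> omega

open SimpleGraph in
lemma good_iff {n : ℕ} (S : Finset (Fin n)) :
    S ∈ goodSets (SimpleGraph.pathGraph n) ↔ ∃ a b : Fin n, a ≤ b ∧ S = Finset.Icc a b := by
  constructor
  · intro hS
    simp only [goodSets, Finset.mem_filter] at hS
    obtain ⟨-, hne, hconn⟩ := hS
    refine ⟨S.min' hne, S.max' hne, S.min'_le _ (S.max'_mem hne), ?_⟩
    apply Finset.Subset.antisymm
    · intro c hc
      rw [Finset.mem_Icc]
      exact ⟨S.min'_le c hc, S.le_max' c hc⟩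
    · intro c hc
      rw [Finset.mem_Icc] at hc
      have hx : (S.min' hne : Fin n) ∈ S := S.min'_mem hne
      have hy : (S.max' hne : Fin n) ∈ S := S.max'_mem hne
      have hr := hconn.preconnected ⟨S.min' hne, by simpa using hx⟩ ⟨S.max' hne, by simpa using hy⟩
      obtain ⟨p⟩ := hr
      exact mem_of_walk p c hc.1 hc.2
  · rintro ⟨a, b, hab, rfl⟩
    simp only [goodSets, Finset.mem_filter]
    refine ⟨Finset.mem_univ _, ⟨a, Finset.mem_Icc.mpr ⟨le_refl a, hab⟩⟩, ?_⟩
    have hamem : a ∈ Finset.Icc a b := Finset.mem_Icc.mpr ⟨le_refl a, hab⟩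
    rw [SimpleGraph.connected_iff]
    constructor
    · intro x y
      by_cases h : (x : Fin n) ≤ (y : Fin n)
      · exact reach_aux a b _ x y h rfl
      · exact (reach_aux a b _ y x (le_of_not_ge h) rfl).symm
    · exact ⟨⟨a, by simpa using hamem⟩⟩

def expo (n : ℕ) (p : Fin n × Fin n) : ℕ :=
  if p.1 = p.2 then (if p.1.val = 0 ∨ p.1.val + 1 = n then n - 1 else n - 2)
  else if p.1.val = 0 ∧ p.2.val + 1 = n then n + 1 else n


/-- the alliance polynomial of the path graph `P_n`, `n ≥ 2`. -/
theorem alliancePoly_pathGraph (n : ℕ) (hn : 2 ≤ n) :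
    alliancePoly (SimpleGraph.pathGraph n)
      = C ((n : ℤ) - 2) * X ^ (n - 2) + C 2 * X ^ (n - 1)
        + C (((n : ℤ) - 2) * ((n : ℤ) + 1) / 2) * X ^ n + X ^ (n + 1) := by
  have h0 : 0 < n := by omega
  have hlast : n - 1 < n := by omega
  set z : Fin n := ⟨0, h0⟩ with hz
  set l : Fin n := ⟨n - 1, hlast⟩ with hl
  set P : Finset (Fin n × Fin n) := Finset.univ.filter (fun p => p.1 ≤ p.2) with hP
  -- image characterization
  have himg : goodSets (SimpleGraph.pathGraph n)
      = P.image (fun p => Finset.Icc p.1 p.2) := by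
    ext S
    rw [good_iff]
    simp only [hP, Finset.mem_image, Finset.mem_filter, Finset.mem_univ, true_and]
    constructor
    · rintro ⟨a, b, hab, rfl⟩; exact ⟨(a, b), hab, rfl⟩
    · rintro ⟨p, hp, rfl⟩; exact ⟨p.1, p.2, hp, rfl⟩
  have hinj : ∀ p ∈ P, ∀ q ∈ P, Finset.Icc p.1 p.2 = Finset.Icc q.1 q.2 → p = q := by
    intro p hp q hq h
    simp only [hP, Finset.mem_filter, Finset.mem_univ, true_and] at hp hq
    have h1 : p.1 ∈ Finset.Icc q.1 q.2 := h ▸ Finset.mem_Icc.mpr ⟨le_refl _, hp⟩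
    have h2 : q.1 ∈ Finset.Icc p.1 p.2 := h.symm ▸ Finset.mem_Icc.mpr ⟨le_refl _, hq⟩
    have h3 : p.2 ∈ Finset.Icc q.1 q.2 := h ▸ Finset.mem_Icc.mpr ⟨hp, le_refl _⟩
    have h4 : q.2 ∈ Finset.Icc p.1 p.2 := h.symm ▸ Finset.mem_Icc.mpr ⟨hq, le_refl _⟩
    rw [Finset.mem_Icc] at h1 h2 h3 h4
    exact Prod.ext (le_antisymm h2.1 h1.1) (le_antisymm h3.2 h4.2)
  rw [alliancePoly, himg, Finset.sum_image hinj]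
  have hsum : ∀ p ∈ P,
      X ^ (((Fintype.card (Fin n) : ℤ) + exactIndex (SimpleGraph.pathGraph n) (Finset.Icc p.1 p.2)).toNat)
        = (X : Polynomial ℤ) ^ (expo n p) := by
    intro p hp
    simp only [hP, Finset.mem_filter, Finset.mem_univ, true_and] at hp
    rw [exactIndex_Icc hn p.1 p.2 hp, Fintype.card_fin, expo]
    split_ifs <;> congr 1 <;> omega
  rw [Finset.sum_congr rfl hsum]
  -- split the sum
  rw [← Finset.sum_filter_add_sum_filter_not P (fun p => p.1 = p.2) (fun p => (X : Polynomial ℤ) ^ (expo n p)),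
    ← Finset.sum_filter_add_sum_filter_not (P.filter (fun p => p.1 = p.2))
      (fun p => p.1.val = 0 ∨ p.1.val + 1 = n) (fun p => (X : Polynomial ℤ) ^ (expo n p)),
    ← Finset.sum_filter_add_sum_filter_not (P.filter (fun p => ¬ p.1 = p.2))
      (fun p => p.1.val = 0 ∧ p.2.val + 1 = n) (fun p => (X : Polynomial ℤ) ^ (expo n p))]
  set S1 := (P.filter (fun p => p.1 = p.2)).filter (fun p => p.1.val = 0 ∨ p.1.val + 1 = n) with hS1
  set S2 := (P.filter (fun p => p.1 = p.2)).filter (fun p => ¬(p.1.val = 0 ∨ p.1.val + 1 = n)) with hS2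
  set S3 := (P.filter (fun p => ¬ p.1 = p.2)).filter (fun p => p.1.val = 0 ∧ p.2.val + 1 = n) with hS3
  set S4 := (P.filter (fun p => ¬ p.1 = p.2)).filter (fun p => ¬(p.1.val = 0 ∧ p.2.val + 1 = n)) with hS4
  have m1 : ∀ p, p ∈ S1 ↔ (p.1 ≤ p.2 ∧ p.1 = p.2 ∧ (p.1.val = 0 ∨ p.1.val + 1 = n)) := by
    intro p
    simp only [hS1, hP, Finset.mem_filter, Finset.mem_univ, true_and]
    tauto
  have m2 : ∀ p, p ∈ S2 ↔ (p.1 ≤ p.2 ∧ p.1 = p.2 ∧ ¬(p.1.val = 0 ∨ p.1.val + 1 = n)) := by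
    intro p
    simp only [hS2, hP, Finset.mem_filter, Finset.mem_univ, true_and]
    tauto
  have m3 : ∀ p, p ∈ S3 ↔ (p.1 ≤ p.2 ∧ ¬p.1 = p.2 ∧ (p.1.val = 0 ∧ p.2.val + 1 = n)) := by
    intro p
    simp only [hS3, hP, Finset.mem_filter, Finset.mem_univ, true_and]
    tauto
  have m4 : ∀ p, p ∈ S4 ↔ (p.1 ≤ p.2 ∧ ¬p.1 = p.2 ∧ ¬(p.1.val = 0 ∧ p.2.val + 1 = n)) := by
    intro p
    simp only [hS4, hP, Finset.mem_filter, Finset.mem_univ, true_and]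
    tauto
  -- evaluate constants on each part
  have E1 : ∀ p ∈ S1, (X : Polynomial ℤ) ^ (expo n p) = X ^ (n - 1) := by
    intro p hp
    rw [m1] at hp
    rw [expo, if_pos hp.2.1, if_pos hp.2.2]
  have E2 : ∀ p ∈ S2, (X : Polynomial ℤ) ^ (expo n p) = X ^ (n - 2) := by
    intro p hp
    rw [m2] at hp
    rw [expo, if_pos hp.2.1, if_neg hp.2.2]
  have E3 : ∀ p ∈ S3, (X : Polynomial ℤ) ^ (expo n p) = X ^ (n + 1) := by
    intro p hp
    rw [m3] at hp
    rw [expo, if_neg hp.2.1, if_pos hp.2.2]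
  have E4 : ∀ p ∈ S4, (X : Polynomial ℤ) ^ (expo n p) = X ^ n := by
    intro p hp
    rw [m4] at hp
    rw [expo, if_neg hp.2.1, if_neg hp.2.2]
  rw [Finset.sum_congr rfl E1, Finset.sum_congr rfl E2, Finset.sum_congr rfl E3,
    Finset.sum_congr rfl E4, Finset.sum_const, Finset.sum_const, Finset.sum_const,
    Finset.sum_const]
  -- cardinalities
  have card1 : S1.card = 2 := by
    have : S1 = {(z, z), (l, l)} := by
      ext p
      rw [m1]
      simp only [Finset.mem_insert, Finset.mem_singleton, Prod.ext_iff, Fin.ext_iff, Fin.le_def,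
        hz, hl]
      omega
    rw [this]
    rw [Finset.card_insert_of_notMem, Finset.card_singleton]
    simp only [Finset.mem_singleton, Prod.ext_iff, Fin.ext_iff, hz, hl]
    omega
  have card2 : S2.card = n - 2 := by
    have himg2 : S2 = (Finset.univ.filter (fun i : Fin n => ¬(i.val = 0 ∨ i.val + 1 = n))).image
        (fun i => (i, i)) := by
      ext p
      rw [m2]
      simp only [Finset.mem_image, Finset.mem_filter, Finset.mem_univ, true_and]
      constructor
      · rintro ⟨hle, heq, hcond⟩
        exact ⟨p.1, hcond, by rw [Prod.ext_iff]; exact ⟨rfl, heq⟩⟩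
      · rintro ⟨i, hcond, rfl⟩
        exact ⟨le_refl _, rfl, hcond⟩
    have hcardf : (Finset.univ.filter (fun i : Fin n => (i.val = 0 ∨ i.val + 1 = n))).card = 2 := by
      have : (Finset.univ.filter (fun i : Fin n => (i.val = 0 ∨ i.val + 1 = n))) = {z, l} := by
        ext i
        simp only [Finset.mem_filter, Finset.mem_univ, true_and, Finset.mem_insert,
          Finset.mem_singleton, Fin.ext_iff, hz, hl]
        omega
      rw [this, Finset.card_insert_of_notMem, Finset.card_singleton]
      simp only [Finset.mem_singleton, Fin.ext_iff, hz, hl]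
      omega
    have hsplit := Finset.card_filter_add_card_filter_not
      (s := (Finset.univ : Finset (Fin n))) (p := fun i : Fin n => (i.val = 0 ∨ i.val + 1 = n))
    rw [Finset.card_univ, Fintype.card_fin, hcardf] at hsplit
    rw [himg2, Finset.card_image_of_injective _ (fun a b h => (Prod.ext_iff.mp h).1)]
    omega
  have card3 : S3.card = 1 := by
    have : S3 = {(z, l)} := by
      ext p
      rw [m3]
      simp only [Finset.mem_singleton, Prod.ext_iff, Fin.ext_iff, Fin.le_def, hz, hl]
      omega
    rw [this, Finset.card_singleton]
  -- the count of S4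
  have hmLT : ∀ p : Fin n × Fin n,
      p ∈ Finset.univ.filter (fun p : Fin n × Fin n => p.1 < p.2) ↔ p.1.val < p.2.val := by
    intro p
    simp only [Finset.mem_filter, Finset.mem_univ, true_and, Fin.lt_def]
  have card4 : S4.card + 1 = (Finset.univ.filter (fun p : Fin n × Fin n => p.1 < p.2)).card := by
    have hS4' : S4 = (Finset.univ.filter (fun p : Fin n × Fin n => p.1 < p.2)).filter
        (fun p => ¬(p.1.val = 0 ∧ p.2.val + 1 = n)) := by
      ext p
      rw [m4]
      simp only [Finset.mem_filter, Finset.mem_univ, true_and, Fin.le_def, Fin.ext_iff,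
        Fin.lt_def]
      omega
    have hS3' : (Finset.univ.filter (fun p : Fin n × Fin n => p.1 < p.2)).filter
        (fun p => (p.1.val = 0 ∧ p.2.val + 1 = n)) = {(z, l)} := by
      ext p
      simp only [Finset.mem_filter, Finset.mem_univ, true_and, Finset.mem_singleton,
        Prod.ext_iff, Fin.ext_iff, Fin.lt_def, hz, hl]
      omega
    have hsplit := Finset.card_filter_add_card_filter_not
      (s := Finset.univ.filter (fun p : Fin n × Fin n => p.1 < p.2))
      (p := fun p : Fin n × Fin n => (p.1.val = 0 ∧ p.2.val + 1 = n))
    rw [hS3', Finset.card_singleton] at hsplit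
    rw [hS4']
    omega
  have cardLT : 2 * (Finset.univ.filter (fun p : Fin n × Fin n => p.1 < p.2)).card + n = n * n := by
    have hGT : Finset.univ.filter (fun p : Fin n × Fin n => p.2 < p.1)
        = (Finset.univ.filter (fun p : Fin n × Fin n => p.1 < p.2)).image Prod.swap := by
      ext q
      simp only [Finset.mem_filter, Finset.mem_univ, true_and, Finset.mem_image]
      constructor
      · intro hq
        exact ⟨q.swap, hq, Prod.swap_swap q⟩
      · rintro ⟨p, hp, rfl⟩
        exact hp
    have hGTcard : (Finset.univ.filter (fun p : Fin n × Fin n => p.2 < p.1)).card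
        = (Finset.univ.filter (fun p : Fin n × Fin n => p.1 < p.2)).card := by
      rw [hGT, Finset.card_image_of_injective _ Prod.swap_injective]
    have hdiag : (Finset.univ.filter (fun p : Fin n × Fin n => ¬ p.1 < p.2)).filter
        (fun p => p.1 = p.2) = Finset.univ.image (fun i : Fin n => (i, i)) := by
      ext p
      simp only [Finset.mem_filter, Finset.mem_univ, true_and, Finset.mem_image]
      constructor
      · rintro ⟨-, heq⟩; exact ⟨p.1, Prod.ext rfl heq⟩
      · rintro ⟨i, rfl⟩
        exact ⟨lt_irrefl i, rfl⟩
    have hgt2 : (Finset.univ.filter (fun p : Fin n × Fin n => ¬ p.1 < p.2)).filter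
        (fun p => ¬ p.1 = p.2) = Finset.univ.filter (fun p : Fin n × Fin n => p.2 < p.1) := by
      ext p
      simp only [Finset.mem_filter, Finset.mem_univ, true_and, Fin.lt_def, Fin.ext_iff]
      omega
    have hdiagcard : ((Finset.univ.filter (fun p : Fin n × Fin n => ¬ p.1 < p.2)).filter
        (fun p => p.1 = p.2)).card = n := by
      rw [hdiag, Finset.card_image_of_injective _ (fun a b h => (Prod.ext_iff.mp h).1),
        Finset.card_univ, Fintype.card_fin]
    have hs1 := Finset.card_filter_add_card_filter_not
      (s := (Finset.univ : Finset (Fin n × Fin n))) (p := fun p : Fin n × Fin n => p.1 < p.2)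
    have hs2 := Finset.card_filter_add_card_filter_not
      (s := Finset.univ.filter (fun p : Fin n × Fin n => ¬ p.1 < p.2))
      (p := fun p : Fin n × Fin n => p.1 = p.2)
    rw [Finset.card_univ, Fintype.card_prod, Fintype.card_fin] at hs1
    rw [hdiagcard, hgt2, hGTcard] at hs2
    omega
  -- put everything together
  rw [card1, card2, card3]
  have hM : ((S4.card : ℤ)) = ((n : ℤ) - 2) * ((n : ℤ) + 1) / 2 := by
    have h1 : ((n : ℤ) - 2) * ((n : ℤ) + 1) = 2 * (S4.card : ℤ) := by
      have hn2 : ((n : ℤ)) * ((n : ℤ)) = ((n * n : ℕ) : ℤ) := by push_cast; ring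
      have : ((n : ℤ) - 2) * ((n : ℤ) + 1) = (n : ℤ) * (n : ℤ) - (n : ℤ) - 2 := by ring
      rw [this, hn2]
      omega
    rw [h1, Int.mul_ediv_cancel_left _ (by norm_num)]
  have hcoef2 : ((n - 2 : ℕ) : ℤ) = (n : ℤ) - 2 := by omega
  simp only [nsmul_eq_mul, one_nsmul]
  rw [show ((2 : ℕ) : Polynomial ℤ) = C 2 by push_cast; exact (map_ofNat C 2).symm,
    show (((n - 2 : ℕ)) : Polynomial ℤ) = C ((n : ℤ) - 2) by
      rw [← hcoef2]; exact (map_natCast C (n - 2)).symm,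
    show ((S4.card : ℕ) : Polynomial ℤ) = C (((n : ℤ) - 2) * ((n : ℤ) + 1) / 2) by
      rw [← hM]; exact (map_natCast C S4.card).symm]
  ring
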